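/- Let p be a prime, n a positive integer, and V = 𝔽_{p^n} regarded as an n-dimensional vector space over 𝔽_p. Let S be the cyclic group of multiplications by elements of 𝔽_{p^n}^× and let X = ΓL(1,p^n) be the group generated by S and the Frobenius map v ↦ v^p. Let G ≤ X, let d = |G : S ∩ G|, assume d > 1, and let q be the smallest prime divisor of d. Then for every non-identity element g ∈ G, the fixed-point set C_V(g) = {v ∈ V : g(v) = v} satisfies |C_V(g)| ≤ |V|^{1/q} = p^{n/q}. -/

import Mathlib

variable (p n : ℕ) [Fact p.Prime]

/-- Multiplications by nonzero field elements, as linear automorphisms of `𝔽_{p^n}`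
over `𝔽_p`; this is the cyclic subgroup `S = GL(1, p^n)`. -/
noncomputable def scalarSubgroup : Subgroup (GaloisField p n ≃ₗ[ZMod p] GaloisField p n) :=
  (DistribMulAction.toModuleAut (ZMod p) (GaloisField p n) :
    (GaloisField p n)ˣ →* _).range

/-- The Frobenius map `v ↦ v^p` as an `𝔽_p`-linear automorphism of `𝔽_{p^n}`. -/
noncomputable def frobLin : GaloisField p n ≃ₗ[ZMod p] GaloisField p n :=
  (frobeniusEquiv (GaloisField p n) p).toAddEquiv.toLinearEquiv (by
    intro c v
    show frobeniusEquiv (GaloisField p n) p (c • v) = c • frobeniusEquiv (GaloisField p n) p v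
    simp only [frobeniusEquiv_def, Algebra.smul_def, mul_pow, ← map_pow, ZMod.pow_card])

/-- The group `X = ΓL(1, p^n)`, generated by the multiplications by nonzero field elements
together with the Frobenius map `v ↦ v^p`. -/
noncomputable def gammaL : Subgroup (GaloisField p n ≃ₗ[ZMod p] GaloisField p n) :=
  scalarSubgroup p n ⊔ Subgroup.closure {frobLin p n}

section Aux

variable {p n}

local notation "K" => GaloisField p n

private theorem frobPow (k : ℕ) : ∀ v : K,
    ((frobeniusEquiv K p ^ k : RingAut K)) v = v ^ p ^ k := by
  induction k with
  | zero => intro v; simp only [pow_zero, pow_one]; rfl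
  | succ k ih =>
      intro v
      have h1 : (frobeniusEquiv K p ^ (k+1) : RingAut K) v
          = (frobeniusEquiv K p ^ k : RingAut K) (frobeniusEquiv K p v) := rfl
      rw [h1, frobeniusEquiv_apply, frobenius_def, ih, ← pow_mul, ← pow_succ']

/-- Fixed points of two Frobenius powers are fixed by the gcd power. -/
private theorem gcd_fix {u : K} {a b : ℕ} (ha : u ^ p ^ a = u) (hb : u ^ p ^ b = u) :
    u ^ p ^ Nat.gcd a b = u := by
  set f : RingAut K := frobeniusEquiv K p with hf
  set H := MulAction.stabilizer (RingAut K) u with hH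
  have hfa : f ^ a ∈ H := by
    rw [MulAction.mem_stabilizer_iff]
    show (f ^ a) u = u
    rw [frobPow]; exact ha
  have hfb : f ^ b ∈ H := by
    rw [MulAction.mem_stabilizer_iff]
    show (f ^ b) u = u
    rw [frobPow]; exact hb
  have key : f ^ ((Nat.gcd a b : ℤ)) ∈ H := by
    rw [Nat.gcd_eq_gcd_ab a b, zpow_add, zpow_mul, zpow_mul]
    exact H.mul_mem (H.zpow_mem (by simpa using hfa) _) (H.zpow_mem (by simpa using hfb) _)
  rw [zpow_natCast] at key
  have : (f ^ Nat.gcd a b) u = u := key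
  rwa [frobPow] at this

private theorem galois_pow_card (hn : n ≠ 0) (v : K) : v ^ p ^ n = v := by
  haveI : Fintype K := Fintype.ofFinite _
  have hcard : Fintype.card K = p ^ n := by
    rw [← Nat.card_eq_fintype_card, GaloisField.card p n hn]
  rw [← hcard]; exact FiniteField.pow_card v

private theorem galois_pow_card_mul (hn : n ≠ 0) (k : ℕ) (v : K) : v ^ p ^ (n * k) = v := by
  induction k with
  | zero => simp
  | succ k ih => rw [Nat.mul_succ, pow_add, pow_mul, ih, galois_pow_card hn]

/-- In a field, the set of solutions of `u ^ m = u` has at most `m` elements (for `m ≥ 2`). -/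
private theorem card_pow_fix_le {F : Type*} [Field F] {m : ℕ} (hm : 2 ≤ m) :
    Nat.card {u : F // u ^ m = u} ≤ m := by
  classical
  set f : Polynomial F := Polynomial.X ^ m - Polynomial.X with hfdef
  have hdeg : f.natDegree = m := by
    rw [hfdef, Polynomial.natDegree_sub_eq_left_of_natDegree_lt, Polynomial.natDegree_X_pow]
    rw [Polynomial.natDegree_X_pow, Polynomial.natDegree_X]; omega
  have hf0 : f ≠ 0 := by
    intro h; rw [h, Polynomial.natDegree_zero] at hdeg; omega
  have hroot : ∀ u : F, u ^ m = u → u ∈ f.roots.toFinset := by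
    intro u hu
    rw [Multiset.mem_toFinset, Polynomial.mem_roots hf0]
    simp [hfdef, Polynomial.IsRoot, sub_eq_zero, hu]
  have inj : Function.Injective
      (fun u : {u : F // u ^ m = u} =>
        (⟨u.1, hroot u.1 u.2⟩ : {x // x ∈ f.roots.toFinset})) := by
    intro a b h
    rw [Subtype.ext_iff] at h ⊢
    exact h
  calc Nat.card {u : F // u ^ m = u}
      ≤ Nat.card {x // x ∈ f.roots.toFinset} := Nat.card_le_card_of_injective _ inj
    _ = f.roots.toFinset.card := Nat.card_eq_finsetCard _
    _ ≤ Multiset.card f.roots := Multiset.toFinset_card_le _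
    _ ≤ f.natDegree := f.card_roots'
    _ = m := hdeg

/-- If every element of `K` is fixed by `v ↦ v ^ p ^ m`, then `n ∣ m`. -/
private theorem n_dvd_of_fix (hn : n ≠ 0) {m : ℕ} (h : ∀ v : K, v ^ p ^ m = v) : n ∣ m := by
  have hp2 : 2 ≤ p := (Fact.out : p.Prime).two_le
  set f : RingAut K := frobeniusEquiv K p with hf
  have hfm : f ^ m = 1 := by
    apply RingEquiv.ext; intro v
    show (f ^ m) v = v
    rw [frobPow]; exact h v
  have hfn : f ^ n = 1 := by
    apply RingEquiv.ext; intro v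
    show (f ^ n) v = v
    rw [frobPow]; exact galois_pow_card hn v
  set k := orderOf f with hk
  have hkn : k ∣ n := orderOf_dvd_of_pow_eq_one hfn
  have hkm : k ∣ m := orderOf_dvd_of_pow_eq_one hfm
  have hk0 : k ≠ 0 := fun h0 => hn (by simpa [h0] using hkn)
  -- every element is fixed by `v ↦ v ^ p ^ k`
  have hfixk : ∀ v : K, v ^ p ^ k = v := by
    intro v
    have : (f ^ k) v = v := by rw [pow_orderOf_eq_one]; rfl
    rwa [frobPow] at this
  have hcard : (p : ℕ) ^ n ≤ p ^ k := by
    have h1 : Nat.card K ≤ p ^ k := by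
      have hinj : Function.Injective (fun v : K => (⟨v, hfixk v⟩ : {u : K // u ^ p ^ k = u})) :=
        fun a b hab => congrArg Subtype.val hab
      calc Nat.card K ≤ Nat.card {u : K // u ^ p ^ k = u} :=
            Nat.card_le_card_of_injective _ hinj
        _ ≤ p ^ k := card_pow_fix_le (by
            calc 2 ≤ p := hp2
              _ = p ^ 1 := (pow_one p).symm
              _ ≤ p ^ k := Nat.pow_le_pow_right (by omega) (Nat.one_le_iff_ne_zero.2 hk0))
    rwa [GaloisField.card p n hn] at h1
  have hnk : n ≤ k := (Nat.pow_le_pow_iff_right (by omega)).1 hcard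
  have : k = n := Nat.le_antisymm (Nat.le_of_dvd (Nat.pos_of_ne_zero hn) hkn) hnk
  rw [← this]; exact hkm

/-- Every element of `ΓL(1, pⁿ)` has the shape `v ↦ c * v ^ p ^ j`. -/
private theorem gammaL_form (hn : n ≠ 0) {x : K ≃ₗ[ZMod p] K} (hx : x ∈ gammaL p n) :
    ∃ (c : Kˣ) (j : ℕ), ∀ v : K, x v = (c : K) * v ^ p ^ j := by
  set T : Subgroup (K ≃ₗ[ZMod p] K) :=
    { carrier := {x | ∃ (c : Kˣ) (j : ℕ), ∀ v : K, x v = (c : K) * v ^ p ^ j}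
      one_mem' := ⟨1, 0, fun v => by simp⟩
      mul_mem' := by
        rintro x y ⟨c, j, hc⟩ ⟨c', j', hc'⟩
        refine ⟨c * c' ^ p ^ j, j' + j, fun v => ?_⟩
        have : (x * y) v = x (y v) := rfl
        rw [this, hc', hc, mul_pow, ← pow_mul, ← pow_add]
        push_cast
        ring
      inv_mem' := by
        rintro x ⟨c, j, hc⟩
        refine ⟨(c⁻¹) ^ p ^ (j * (n - 1)), j * (n - 1), fun v => ?_⟩
        have hxinv : x⁻¹ v = x.symm v := rfl
        rw [hxinv, LinearEquiv.symm_apply_eq, hc, mul_pow, ← pow_mul, ← pow_add]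
        have hexp : j * (n - 1) + j = n * j := by
          cases n with
          | zero => omega
          | succ n' => simp only [Nat.succ_sub_one]; ring
        have hcpow : ((c⁻¹ : Kˣ) : K) ^ (p ^ (j * (n - 1)) * p ^ j) = ((c⁻¹ : Kˣ) : K) := by
          rw [← pow_add, hexp, galois_pow_card_mul hn]
        rw [Units.val_pow_eq_pow_val, ← pow_mul, hcpow, hexp,
          galois_pow_card_mul hn, ← mul_assoc]
        simp } with hT
  have hS : scalarSubgroup p n ≤ T := by
    rintro y ⟨a, rfl⟩
    refine ⟨a, 0, fun v => ?_⟩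
    show a • v = (a : K) * v ^ p ^ 0
    rw [pow_zero, pow_one, Units.smul_def, smul_eq_mul]
  have hF : Subgroup.closure {frobLin p n} ≤ T := by
    rw [Subgroup.closure_le]
    rintro y hy
    rw [Set.mem_singleton_iff] at hy
    subst hy
    refine ⟨1, 1, fun v => ?_⟩
    show frobenius K p v = ((1 : Kˣ) : K) * v ^ p ^ 1
    rw [frobenius_def, pow_one, Units.val_one, one_mul]
  exact (sup_le hS hF : gammaL p n ≤ T) hx

private theorem pow_form {x : K ≃ₗ[ZMod p] K} {c : Kˣ} {j : ℕ}
    (h : ∀ v : K, x v = (c : K) * v ^ p ^ j) (t : ℕ) :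
    ∃ c' : Kˣ, ∀ v : K, (x ^ t) v = (c' : K) * v ^ p ^ (j * t) := by
  induction t with
  | zero => exact ⟨1, fun v => by simp⟩
  | succ t ih =>
      obtain ⟨c', hc'⟩ := ih
      refine ⟨c * c' ^ p ^ j, fun v => ?_⟩
      have h1 : (x ^ (t + 1)) v = x ((x ^ t) v) := by
        rw [pow_succ']; rfl
      rw [h1, hc', h, mul_pow, ← pow_mul, ← pow_add]
      have : j * t + j = j * (t + 1) := by ring
      rw [this]
      push_cast
      ring

private theorem natCard_le_one {α : Type*} [Subsingleton α] : Nat.card α ≤ 1 := by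
  rcases isEmpty_or_nonempty α with h | h
  · simp [Nat.card_of_isEmpty]
  · haveI : Unique α := uniqueOfSubsingleton (Classical.arbitrary α)
    simp [Nat.card_unique]

/-- The scalar subgroup is normal in any subgroup of `ΓL(1, pⁿ)`. -/
private theorem scalar_normal (hn : n ≠ 0) {G : Subgroup (K ≃ₗ[ZMod p] K)}
    (hG : G ≤ gammaL p n) : ((scalarSubgroup p n).subgroupOf G).Normal := by
  constructor
  intro x hx g
  rw [Subgroup.mem_subgroupOf] at hx ⊢
  obtain ⟨a, ha⟩ := hx
  obtain ⟨c, j, hcj⟩ := gammaL_form hn (hG g.2)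
  refine ⟨a ^ p ^ j, ?_⟩
  apply LinearEquiv.toLinearMap_injective
  apply LinearMap.ext
  intro v
  set w : K := (g : K ≃ₗ[ZMod p] K).symm v with hw
  have hxw : (x : K ≃ₗ[ZMod p] K) w = (a : K) * w := by
    rw [← ha]
    show a • w = (a : K) * w
    rw [Units.smul_def, smul_eq_mul]
  have hgw : (c : K) * w ^ p ^ j = v := by
    rw [← hcj w, hw, LinearEquiv.apply_symm_apply]
  have h1 : ((g * x * g⁻¹ : G) : K ≃ₗ[ZMod p] K) v
      = (g : K ≃ₗ[ZMod p] K) ((x : K ≃ₗ[ZMod p] K) w) := rfl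
  show ((a ^ p ^ j : (GaloisField p n)ˣ) : K) • v = ((g * x * g⁻¹ : G) : K ≃ₗ[ZMod p] K) v
  rw [h1, hxw, hcj, mul_pow, smul_eq_mul, Units.val_pow_eq_pow_val]
  rw [← hgw]
  ring

end Aux

/-- Let `G ≤ ΓL(1, p^n)`, let `d = |G : S ∩ G| > 1` and let `q` be the smallest prime divisor
of `d`. Then for every non-identity `g ∈ G` the fixed-point set of `g` on `V = 𝔽_{p^n}`
satisfies `|C_V(g)| ≤ |V|^{1/q} = p^{n/q}`. -/
theorem card_fixedPoints_le (hn : 0 < n)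
    (G : Subgroup (GaloisField p n ≃ₗ[ZMod p] GaloisField p n)) (hG : G ≤ gammaL p n)
    (d : ℕ) (hd : d = (scalarSubgroup p n).relIndex G) (hd1 : 1 < d)
    (g : G) (hg : g ≠ 1) :
    Nat.card {v : GaloisField p n // (g : GaloisField p n ≃ₗ[ZMod p] GaloisField p n) v = v} ≤
      p ^ (n / d.minFac) := by
  have hn0 : n ≠ 0 := hn.ne'
  have hp2 : 2 ≤ p := (Fact.out : p.Prime).two_le
  have hone : 1 ≤ p ^ (n / d.minFac) := Nat.one_le_pow _ _ (by omega)
  obtain ⟨c, j, hcj⟩ := gammaL_form hn0 (hG g.2)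
  by_cases hj : n ∣ j
  · -- `g` is multiplication by a scalar `c ≠ 1`; only `0` is fixed.
    obtain ⟨k, rfl⟩ := hj
    have hgv : ∀ v : GaloisField p n, (g : GaloisField p n ≃ₗ[ZMod p] GaloisField p n) v
        = (c : GaloisField p n) * v := by
      intro v; rw [hcj, galois_pow_card_mul hn0]
    have hc1 : (c : GaloisField p n) ≠ 1 := by
      intro h1
      apply hg
      apply Subtype.ext
      apply LinearEquiv.toLinearMap_injective
      apply LinearMap.ext
      intro v
      show (g : GaloisField p n ≃ₗ[ZMod p] GaloisField p n) v
        = ((1 : G) : GaloisField p n ≃ₗ[ZMod p] GaloisField p n) v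
      rw [hgv, h1, one_mul]; rfl
    have hss : Subsingleton
        {v : GaloisField p n // (g : GaloisField p n ≃ₗ[ZMod p] GaloisField p n) v = v} := by
      constructor
      rintro ⟨a, ha⟩ ⟨b, hb⟩
      have key : ∀ w : GaloisField p n,
          (g : GaloisField p n ≃ₗ[ZMod p] GaloisField p n) w = w → w = 0 := by
        intro w hw
        rw [hgv] at hw
        by_contra hw0
        exact hc1 (mul_right_cancel₀ hw0 (by rw [one_mul]; exact hw))
      exact Subtype.ext (show a = b by rw [key a ha, key b hb])
    exact le_trans natCard_le_one hone
  · -- main case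
    have hj0 : j ≠ 0 := fun h => hj (h ▸ dvd_zero n)
    -- group-theoretic part: the "field-twist order" m divides d
    set S' := (scalarSubgroup p n).subgroupOf G with hS'
    haveI hSnormal : S'.Normal := scalar_normal hn0 hG
    have hdcard : Nat.card (G ⧸ S') = d := by
      rw [hd]; rfl
    haveI : Finite (G ⧸ S') := Nat.finite_of_card_ne_zero (by omega)
    set t := orderOf (QuotientGroup.mk g : G ⧸ S') with htdef
    have htd : t ∣ d := hdcard ▸ orderOf_dvd_natCard _
    have ht0 : t ≠ 0 := (orderOf_pos _).ne'
    have hgt : g ^ t ∈ S' := by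
      rw [← QuotientGroup.eq_one_iff]
      show ((QuotientGroup.mk g : G ⧸ S') ^ t) = 1
      exact pow_orderOf_eq_one _
    have hmem : ((g : GaloisField p n ≃ₗ[ZMod p] GaloisField p n) ^ t) ∈ scalarSubgroup p n := by
      rw [Subgroup.mem_subgroupOf] at hgt
      simpa using hgt
    obtain ⟨a, ha⟩ := hmem
    obtain ⟨c', hc'⟩ := pow_form hcj t
    have hfixjt : ∀ v : GaloisField p n, v ^ p ^ (j * t) = v := by
      have h1 : ∀ v : GaloisField p n, (a : GaloisField p n) * v
          = (c' : GaloisField p n) * v ^ p ^ (j * t) := by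
        intro v
        rw [← hc' v, ← ha]
        show (a : GaloisField p n) * v = a • v
        rw [Units.smul_def, smul_eq_mul]
      have h2 : (a : GaloisField p n) = (c' : GaloisField p n) := by
        have := h1 1; simpa using this
      intro v
      have := h1 v
      rw [h2] at this
      exact (mul_left_cancel₀ c'.ne_zero this).symm
    have hndvd : n ∣ j * t := n_dvd_of_fix hn0 hfixjt
    set e := Nat.gcd j n with hedef
    have he0 : 0 < e := Nat.gcd_pos_of_pos_right _ hn
    set m := n / e with hmdef
    have hem : e * m = n := Nat.mul_div_cancel' (Nat.gcd_dvd_right j n)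
    have hm1 : 1 < m := by
      by_contra hle2
      push_neg at hle2
      interval_cases m
      · rw [mul_zero] at hem; omega
      · rw [mul_one] at hem
        exact hj (by rw [← hem]; exact Nat.gcd_dvd_left j n)
    have hmt : m ∣ t := by
      have h1 : e * m ∣ (e * (j / e)) * t := by
        rw [hem, Nat.mul_div_cancel' (Nat.gcd_dvd_left j n)]
        exact hndvd
      have h2 : m ∣ (j / e) * t := by
        rw [mul_assoc] at h1
        exact (mul_dvd_mul_iff_left (a := e) (by omega)).1 h1
      exact (Nat.coprime_div_gcd_div_gcd he0).symm.dvd_of_dvd_mul_left h2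
    have hmd : m ∣ d := hmt.trans htd
    have hqm : d.minFac ≤ m := Nat.minFac_le_of_dvd hm1 hmd
    have hle : e ≤ n / d.minFac := by
      have heq : e = n / m := by
        rw [← hem, Nat.mul_div_cancel _ (by omega)]
      rw [heq]
      exact Nat.div_le_div_left hqm d.minFac_pos
    have hpe : p ^ e ≤ p ^ (n / d.minFac) := Nat.pow_le_pow_right (by omega) hle
    -- counting part
    by_cases hw : ∃ w : GaloisField p n,
        w ≠ 0 ∧ (g : GaloisField p n ≃ₗ[ZMod p] GaloisField p n) w = w
    · obtain ⟨w, hw0, hwf⟩ := hw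
      have hwj : w ^ p ^ j = (c : GaloisField p n)⁻¹ * w := by
        rw [eq_inv_mul_iff_mul_eq₀ (Units.ne_zero c), ← hcj]; exact hwf
      have hfixu : ∀ v : GaloisField p n,
          (g : GaloisField p n ≃ₗ[ZMod p] GaloisField p n) v = v →
          (v * w⁻¹) ^ p ^ e = v * w⁻¹ := by
        intro v hv
        have hvj : v ^ p ^ j = (c : GaloisField p n)⁻¹ * v := by
          rw [eq_inv_mul_iff_mul_eq₀ (Units.ne_zero c), ← hcj]; exact hv
        have huj : (v * w⁻¹) ^ p ^ j = v * w⁻¹ := by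
          rw [mul_pow, hvj, inv_pow, hwj]
          have hcne : (c : GaloisField p n)⁻¹ ≠ 0 := inv_ne_zero (Units.ne_zero c)
          field_simp
        have hun : (v * w⁻¹) ^ p ^ n = v * w⁻¹ := galois_pow_card hn0 _
        exact gcd_fix huj hun
      set φ : {v : GaloisField p n // (g : GaloisField p n ≃ₗ[ZMod p] GaloisField p n) v = v}
          → {u : GaloisField p n // u ^ p ^ e = u} :=
        fun v => ⟨v.1 * w⁻¹, hfixu v.1 v.2⟩ with hφ
      have hinj : Function.Injective φ := by
        rintro ⟨v₁, h₁⟩ ⟨v₂, h₂⟩ hv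
        rw [Subtype.ext_iff] at hv
        exact Subtype.ext (mul_right_cancel₀ (inv_ne_zero hw0) hv)
      calc Nat.card {v : GaloisField p n //
              (g : GaloisField p n ≃ₗ[ZMod p] GaloisField p n) v = v}
          ≤ Nat.card {u : GaloisField p n // u ^ p ^ e = u} :=
            Nat.card_le_card_of_injective φ hinj
        _ ≤ p ^ e := card_pow_fix_le (by
              calc 2 ≤ p := hp2
                _ = p ^ 1 := (pow_one p).symm
                _ ≤ p ^ e := Nat.pow_le_pow_right (by omega) he0)
        _ ≤ p ^ (n / d.minFac) := hpe
    · push_neg at hw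
      have hss : Subsingleton
          {v : GaloisField p n // (g : GaloisField p n ≃ₗ[ZMod p] GaloisField p n) v = v} := by
        constructor
        rintro ⟨a', ha'⟩ ⟨b', hb'⟩
        have key : ∀ v : GaloisField p n,
            (g : GaloisField p n ≃ₗ[ZMod p] GaloisField p n) v = v → v = 0 := by
          intro v hv
          by_contra hv0
          exact (hw v hv0) hv
        exact Subtype.ext (show a' = b' by rw [key a' ha', key b' hb'])
      exact le_trans natCard_le_one hone
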